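/- The right action of GL_4(F) × F^× (via the homomorphism e) on the set of 2-dimensional totally isotropic subspaces of the split quadratic space (F^8, B) has exactly seven orbits. -/

import Mathlib

/-!
Statement 6: The right action of GL₄(F) × F^× (via the homomorphism e) on the set of
2-dimensional totally isotropic subspaces of the split quadratic space (F⁸, B) has
exactly seven orbits.
-/

open Matrix

variable (F : Type*) [Field F]

/-- The n×n matrix with 1 in every antidiagonal entry and 0 elsewhere. -/
def Ip (n : ℕ) : Matrix (Fin n) (Fin n) F :=
  Matrix.of fun i j => if (i : ℕ) + (j : ℕ) = n - 1 then 1 else 0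

/-- The split symmetric bilinear form `B(v,w) = v · I'₈ · ᵀw` on row vectors of `F⁸`. -/
def B8 (v w : Fin 8 → F) : F := v ⬝ᵥ ((Ip F 8) *ᵥ w)

def TotallyIsotropic (S : Submodule F (Fin 8 → F)) : Prop :=
  ∀ v ∈ S, ∀ w ∈ S, B8 F v w = 0

/-- `e(r,a) = block-diag(r, a·I'₄·ᵀr⁻¹·I'₄)`. -/
noncomputable def emap (r : Matrix (Fin 4) (Fin 4) F) (a : F) : Matrix (Fin 8) (Fin 8) F :=
  Matrix.of fun i j =>
    if hi : (i : ℕ) < 4 then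
      if hj : (j : ℕ) < 4 then r ⟨(i : ℕ), hi⟩ ⟨(j : ℕ), hj⟩ else 0
    else
      if hj : (j : ℕ) < 4 then 0
      else
        a * (Ip F 4 * r⁻¹ᵀ * Ip F 4)
          ⟨(i : ℕ) - 4, by have := i.isLt; omega⟩
          ⟨(j : ℕ) - 4, by have := j.isLt; omega⟩

/-- `S` and `T` lie in the same orbit under the right action of `GL₄(F) × F^×` via `e`. -/
noncomputable def SameOrbit (S T : Submodule F (Fin 8 → F)) : Prop :=
  ∃ (r : Matrix (Fin 4) (Fin 4) F) (a : F), r.det ≠ 0 ∧ a ≠ 0 ∧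
    Submodule.map (Matrix.vecMulLinear (emap F r a)) S = T


set_option linter.unusedSectionVars false
set_option maxHeartbeats 1000000

namespace S6
variable {F : Type*} [Field F]

@[simp] lemma v43 : ((3:Fin 4):ℕ) = 3 := rfl
@[simp] lemma v83 : ((3:Fin 8):ℕ) = 3 := rfl
@[simp] lemma v84 : ((4:Fin 8):ℕ) = 4 := rfl
@[simp] lemma v85 : ((5:Fin 8):ℕ) = 5 := rfl
@[simp] lemma v86 : ((6:Fin 8):ℕ) = 6 := rfl
@[simp] lemma v87 : ((7:Fin 8):ℕ) = 7 := rfl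
@[simp] lemma m40 (h : (0:ℕ) < 4) : (⟨0,h⟩ : Fin 4) = 0 := rfl
@[simp] lemma m41 (h : (1:ℕ) < 4) : (⟨1,h⟩ : Fin 4) = 1 := rfl
@[simp] lemma m42 (h : (2:ℕ) < 4) : (⟨2,h⟩ : Fin 4) = 2 := rfl
@[simp] lemma m43 (h : (3:ℕ) < 4) : (⟨3,h⟩ : Fin 4) = 3 := rfl
@[simp] lemma m80 (h : (0:ℕ) < 8) : (⟨0,h⟩ : Fin 8) = 0 := rfl
@[simp] lemma m81 (h : (1:ℕ) < 8) : (⟨1,h⟩ : Fin 8) = 1 := rfl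
@[simp] lemma m82 (h : (2:ℕ) < 8) : (⟨2,h⟩ : Fin 8) = 2 := rfl
@[simp] lemma m83 (h : (3:ℕ) < 8) : (⟨3,h⟩ : Fin 8) = 3 := rfl
@[simp] lemma m84 (h : (4:ℕ) < 8) : (⟨4,h⟩ : Fin 8) = 4 := rfl
@[simp] lemma m85 (h : (5:ℕ) < 8) : (⟨5,h⟩ : Fin 8) = 5 := rfl
@[simp] lemma m86 (h : (6:ℕ) < 8) : (⟨6,h⟩ : Fin 8) = 6 := rfl
@[simp] lemma m87 (h : (7:ℕ) < 8) : (⟨7,h⟩ : Fin 8) = 7 := rfl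

def xp (v : Fin 8 → F) : Fin 4 → F := fun j => v ⟨j.1, by have := j.isLt; omega⟩
def yp (v : Fin 8 → F) : Fin 4 → F := fun j => v ⟨7 - j.1, by have := j.isLt; omega⟩

@[simp] lemma xp0 (v : Fin 8 → F) : xp v 0 = v 0 := rfl
@[simp] lemma xp1 (v : Fin 8 → F) : xp v 1 = v 1 := rfl
@[simp] lemma xp2 (v : Fin 8 → F) : xp v 2 = v 2 := rfl
@[simp] lemma xp3 (v : Fin 8 → F) : xp v 3 = v 3 := rfl
@[simp] lemma yp0 (v : Fin 8 → F) : yp v 0 = v 7 := rfl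
@[simp] lemma yp1 (v : Fin 8 → F) : yp v 1 = v 6 := rfl
@[simp] lemma yp2 (v : Fin 8 → F) : yp v 2 = v 5 := rfl
@[simp] lemma yp3 (v : Fin 8 → F) : yp v 3 = v 4 := rfl

@[simp] lemma xp_add (v w : Fin 8 → F) : xp (v + w) = xp v + xp w := rfl
@[simp] lemma xp_smul (c : F) (v : Fin 8 → F) : xp (c • v) = c • xp v := rfl
@[simp] lemma yp_add (v w : Fin 8 → F) : yp (v + w) = yp v + yp w := rfl
@[simp] lemma yp_smul (c : F) (v : Fin 8 → F) : yp (c • v) = c • yp v := rfl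
@[simp] lemma xp_zero : xp (0 : Fin 8 → F) = 0 := rfl
@[simp] lemma yp_zero : yp (0 : Fin 8 → F) = 0 := rfl

lemma B8_xy (v w : Fin 8 → F) : B8 F v w = xp v ⬝ᵥ yp w + xp w ⬝ᵥ yp v := by
  simp (config := { decide := true })
    [B8, Ip, Matrix.mulVec, dotProduct, Fin.sum_univ_eight, Fin.sum_univ_four]
  ring

lemma ext_xy {v w : Fin 8 → F} (hx : xp v = xp w) (hy : yp v = yp w) : v = w := by
  funext i
  rcases lt_or_ge (i : ℕ) 4 with h | h
  · have h1 := congrFun hx ⟨i.1, h⟩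
    simpa [xp, Fin.eta] using h1
  · have h1 := congrFun hy ⟨7 - i.1, by have := i.isLt; omega⟩
    simp only [yp] at h1
    have h2 : (⟨7 - (7 - (i:ℕ)), by have := i.isLt; omega⟩ : Fin 8) = i := by
      ext; have := i.isLt; simp; omega
    rwa [h2] at h1

/-- glue: build a vector from its two coordinate halves -/
def glue (u w : Fin 4 → F) : Fin 8 → F := fun i =>
  if h : (i : ℕ) < 4 then u ⟨i.1, h⟩ else w ⟨7 - i.1, by have := i.isLt; omega⟩

@[simp] lemma xp_glue (u w : Fin 4 → F) : xp (glue u w) = u := by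
  funext j; simp only [xp, glue]
  rw [dif_pos (by exact j.isLt)]
@[simp] lemma yp_glue (u w : Fin 4 → F) : yp (glue u w) = w := by
  funext j
  have hj := j.isLt
  simp only [yp, glue]
  rw [dif_neg (by omega)]
  congr 1; ext; simp; omega
lemma glue_xy (v : Fin 8 → F) : glue (xp v) (yp v) = v :=
  ext_xy (by simp) (by simp)

lemma xp_e (v : Fin 8 → F) (r : Matrix (Fin 4) (Fin 4) F) (a : F) :
    xp (v ᵥ* emap F r a) = (xp v) ᵥ* r := by
  funext j
  fin_cases j <;>
    simp (config := { decide := true })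
      [emap, Matrix.vecMul, dotProduct, Fin.sum_univ_eight, Fin.sum_univ_four, xp, yp]

lemma yp_e (v : Fin 8 → F) (r : Matrix (Fin 4) (Fin 4) F) (a : F) :
    yp (v ᵥ* emap F r a) = a • (r⁻¹ *ᵥ yp v) := by
  funext j
  fin_cases j <;>
    · simp (config := { decide := true })
        [emap, Matrix.vecMul, Matrix.mulVec, Matrix.mul_apply, Ip, dotProduct,
         Fin.sum_univ_eight, Fin.sum_univ_four, xp, yp]
      ring

lemma vecMulLinear_apply' (M : Matrix (Fin 8) (Fin 8) F) (v : Fin 8 → F) :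
    Matrix.vecMulLinear M v = v ᵥ* M := rfl

lemma emap_inv_cancel {r : Matrix (Fin 4) (Fin 4) F} {a : F}
    (hr : r.det ≠ 0) (ha : a ≠ 0) (v : Fin 8 → F) :
    (v ᵥ* emap F r a) ᵥ* emap F r⁻¹ a⁻¹ = v := by
  have hu : IsUnit r.det := isUnit_iff_ne_zero.2 hr
  apply ext_xy
  · rw [xp_e, xp_e, Matrix.vecMul_vecMul, Matrix.mul_nonsing_inv _ hu, Matrix.vecMul_one]
  · rw [yp_e, yp_e]
    rw [Matrix.mulVec_smul, Matrix.mulVec_mulVec, Matrix.nonsing_inv_nonsing_inv _ hu,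
      Matrix.mul_nonsing_inv _ hu, Matrix.one_mulVec, smul_smul, inv_mul_cancel₀ ha, one_smul]

lemma emap_inv_cancel' {r : Matrix (Fin 4) (Fin 4) F} {a : F}
    (hr : r.det ≠ 0) (ha : a ≠ 0) (v : Fin 8 → F) :
    (v ᵥ* emap F r⁻¹ a⁻¹) ᵥ* emap F r a = v := by
  have hu : IsUnit r.det := isUnit_iff_ne_zero.2 hr
  apply ext_xy
  · rw [xp_e, xp_e, Matrix.vecMul_vecMul, Matrix.nonsing_inv_mul _ hu, Matrix.vecMul_one]
  · rw [yp_e, yp_e]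
    rw [Matrix.mulVec_smul, Matrix.mulVec_mulVec, Matrix.nonsing_inv_nonsing_inv _ hu,
      Matrix.nonsing_inv_mul _ hu, Matrix.one_mulVec, smul_smul, mul_inv_cancel₀ ha, one_smul]

lemma sameOrbit_symm {S T : Submodule F (Fin 8 → F)} (h : SameOrbit F S T) : SameOrbit F T S := by
  obtain ⟨r, a, hr, ha, hmap⟩ := h
  have hu : IsUnit r.det := isUnit_iff_ne_zero.2 hr
  refine ⟨r⁻¹, a⁻¹, ?_, inv_ne_zero ha, ?_⟩
  · have := r.isUnit_nonsing_inv_det hu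
    exact this.ne_zero
  · rw [← hmap, ← Submodule.map_comp]
    have : (Matrix.vecMulLinear (emap F r⁻¹ a⁻¹)).comp (Matrix.vecMulLinear (emap F r a))
        = LinearMap.id := by
      apply LinearMap.ext; intro v
      simp only [LinearMap.comp_apply, vecMulLinear_apply', LinearMap.id_apply]
      exact emap_inv_cancel hr ha v
    rw [this, Submodule.map_id]
section
variable {F : Type*} [Field F] {V : Type*} [AddCommGroup V] [Module F V]
open Submodule Module

lemma indep_combo {v1 v2 : V} (h : LinearIndependent F ![v1,v2]) (p q r s : F)
    (hd : p*s - q*r ≠ 0) : LinearIndependent F ![p•v1+q•v2, r•v1+s•v2] := by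
  rw [LinearIndependent.pair_iff] at h ⊢
  intro α β hab
  have h1 : (α*p+β*r) • v1 + (α*q+β*s) • v2 = 0 := by
    rw [← hab]; module
  obtain ⟨e1, e2⟩ := h _ _ h1
  have hα : α * (p*s - q*r) = 0 := by linear_combination s * e1 - r * e2
  have hβ : β * (p*s - q*r) = 0 := by linear_combination p * e2 - q * e1
  exact ⟨(mul_eq_zero.1 hα).resolve_right hd, (mul_eq_zero.1 hβ).resolve_right hd⟩

lemma span_combo {v1 v2 : V} (p q r s : F) (hd : p*s - q*r ≠ 0) :
    span F {p•v1+q•v2, r•v1+s•v2} = span F {v1, v2} := by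
  apply le_antisymm
  · rw [span_le]
    intro x hx
    simp only [Set.mem_insert_iff, Set.mem_singleton_iff] at hx
    rcases hx with rfl | rfl <;>
      exact add_mem (smul_mem _ _ (subset_span (by simp))) (smul_mem _ _ (subset_span (by simp)))
  · rw [span_le]
    intro x hx
    simp only [Set.mem_insert_iff, Set.mem_singleton_iff] at hx
    apply SetLike.mem_coe.2
    rw [mem_span_pair]
    rcases hx with rfl | rfl
    · refine ⟨s/(p*s-q*r), -q/(p*s-q*r), ?_⟩
      match_scalars <;> grind
    · refine ⟨-r/(p*s-q*r), p/(p*s-q*r), ?_⟩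
      match_scalars <;> grind

lemma reduce_pair {y1 y2 : V} (h : ¬ LinearIndependent F ![y1,y2]) (h0 : ¬(y1 = 0 ∧ y2 = 0)) :
    ∃ p q r s : F, p*s - q*r ≠ 0 ∧ r•y1 + s•y2 = 0 ∧ p•y1 + q•y2 ≠ 0 := by
  by_cases hy2 : y2 = 0
  · have hy1 : y1 ≠ 0 := fun hy1 => h0 ⟨hy1, hy2⟩
    exact ⟨1, 0, 0, 1, by norm_num, by simp [hy2], by simpa using hy1⟩
  by_cases hy1 : y1 = 0
  · exact ⟨0, 1, 1, 0, by norm_num, by simp [hy1], by simpa using hy2⟩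
  rw [LinearIndependent.pair_iff] at h
  push_neg at h
  obtain ⟨s, t, hst, hne⟩ := h
  by_cases ht : t = 0
  · subst ht
    have hs : s ≠ 0 := fun hs => hne hs rfl
    exact absurd (by
      have : s • y1 = 0 := by simpa using hst
      simpa [hs] using this : y1 = 0) hy1
  · exact ⟨1, 0, s, t, by simpa using ht, hst, by simpa using hy1⟩

lemma pair_fst_ne_zero {v1 v2 : V} (h : LinearIndependent F ![v1,v2]) : v1 ≠ 0 :=
  fun hv => h.ne_zero 0 (by simp [hv])
lemma pair_snd_ne_zero {v1 v2 : V} (h : LinearIndependent F ![v1,v2]) : v2 ≠ 0 :=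
  fun hv => h.ne_zero 1 (by simp [hv])

lemma range_pair (a b : V) : Set.range ![a,b] = {a, b} := by
  ext x
  simp only [Set.mem_range, Set.mem_insert_iff, Set.mem_singleton_iff]
  constructor
  · rintro ⟨i, rfl⟩; fin_cases i <;> simp
  · rintro (rfl | rfl)
    · exact ⟨0, rfl⟩
    · exact ⟨1, rfl⟩

lemma range_triple (a b c : V) : Set.range ![a,b,c] = {a, b, c} := by
  ext x
  simp only [Set.mem_range, Set.mem_insert_iff, Set.mem_singleton_iff]
  constructor
  · rintro ⟨i, rfl⟩; fin_cases i <;> simp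
  · rintro (rfl | rfl | rfl)
    · exact ⟨0, rfl⟩
    · exact ⟨1, rfl⟩
    · exact ⟨2, rfl⟩

lemma finrank_span_pair_eq_two {a b : V} (h : LinearIndependent F ![a,b]) :
    Module.finrank F (span F {a,b}) = 2 := by
  rw [← range_pair, finrank_span_eq_card h]
  simp

lemma finrank_span_pair_le (a b : V) : Module.finrank F (span F ({a,b} : Set V)) ≤ 2 := by
  rw [← range_pair]
  simpa [Set.finrank] using finrank_range_le_card (R := F) ![a,b]

lemma finrank_span_triple_le (a b c : V) :
    Module.finrank F (span F ({a,b,c} : Set V)) ≤ 3 := by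
  rw [← range_triple]
  simpa [Set.finrank] using finrank_range_le_card (R := F) ![a,b,c]

end
section
variable {F : Type*} [Field F]
open Submodule Module

/-- standard basis vector of F^4 -/
def sv (j : Fin 4) : Fin 4 → F := Pi.single j 1

@[simp] lemma sv_apply (j k : Fin 4) : (sv j : Fin 4 → F) k = if k = j then 1 else 0 := by
  simp [sv, Pi.single_apply]

lemma span_singles_top {S : Submodule F (Fin 4 → F)} (h : ∀ j, (sv j : Fin 4 → F) ∈ S) :
    S = ⊤ := by
  rw [eq_top_iff]
  intro v _
  have hv : v = ∑ j : Fin 4, v j • (sv j : Fin 4 → F) := by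
    funext k
    rw [Fintype.sum_apply]
    simp [Finset.sum_ite_eq]
  rw [hv]
  exact Submodule.sum_mem _ fun j _ => Submodule.smul_mem _ _ (h j)

lemma exists_single_not_mem {S : Submodule F (Fin 4 → F)} (h : S ≠ ⊤) :
    ∃ j, (sv j : Fin 4 → F) ∉ S := by
  by_contra hc; push_neg at hc; exact h (span_singles_top hc)

lemma li_singles {k : ℕ} (g : Fin k → Fin 4) (hg : Function.Injective g) :
    LinearIndependent F (fun i => (sv (g i) : Fin 4 → F)) := by
  have h1 := (Pi.basisFun F (Fin 4)).linearIndependent.comp g hg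
  have h2 : (⇑(Pi.basisFun F (Fin 4)) ∘ g) = fun i => (sv (g i) : Fin 4 → F) := by
    funext i; simp [sv, Function.comp]
  rwa [h2] at h1

lemma snoc_pair {V : Type*} (a b c : V) : Fin.snoc ![a,b] c = ![a,b,c] := by
  funext i
  rcases i with ⟨i, hi⟩
  interval_cases i <;> rfl
lemma snoc_triple {V : Type*} (a b c d : V) : Fin.snoc ![a,b,c] d = ![a,b,c,d] := by
  funext i
  rcases i with ⟨i, hi⟩
  interval_cases i <;> rfl

lemma indep_quad {V : Type*} [AddCommGroup V] [Module F V] {a b c d : V}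
    (hab : LinearIndependent F ![a,b]) (hc : c ∉ span F {a,b}) (hd : d ∉ span F {a,b,c}) :
    LinearIndependent F ![a,b,c,d] := by
  have h3 : LinearIndependent F ![a,b,c] := by
    rw [← snoc_pair, linearIndependent_fin_snoc]
    exact ⟨hab, by rwa [range_pair]⟩
  rw [← snoc_triple, linearIndependent_fin_snoc]
  exact ⟨h3, by rwa [range_triple]⟩

lemma det_ne_zero_of_rows {R0 R1 R2 R3 : Fin 4 → F}
    (h : LinearIndependent F ![R0,R1,R2,R3]) :
    (Matrix.of ![R0,R1,R2,R3]).det ≠ 0 := by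
  have : IsUnit (Matrix.of ![R0,R1,R2,R3]) := Matrix.linearIndependent_rows_iff_isUnit.1 h
  exact ((Matrix.isUnit_iff_isUnit_det _).1 this).ne_zero

lemma comp_pair {V W : Type*} [AddCommGroup V] [Module F V] [AddCommGroup W] [Module F W]
    (f : V →ₗ[F] W) (a b : V) : (⇑f ∘ ![a,b]) = ![f a, f b] := by
  funext i; fin_cases i <;> simp

lemma UL {x1 x2 y1 y2 : Fin 4 → F} (hx : LinearIndependent F ![x1,x2])
    (hy : LinearIndependent F ![y1,y2]) :
    ∃ r : Matrix (Fin 4) (Fin 4) F, r.det ≠ 0 ∧ r 0 = x1 ∧ r 1 = x2 ∧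
      r *ᵥ y1 = ![x1 ⬝ᵥ y1, x2 ⬝ᵥ y1, 1, 0] ∧ r *ᵥ y2 = ![x1 ⬝ᵥ y2, x2 ⬝ᵥ y2, 0, 1] := by
  classical
  have hfr4 : Module.finrank F (Fin 4 → F) = 4 := Module.finrank_fin_fun (R := F)
  have h2top : span F {y1,y2} ≠ ⊤ := by
    intro h
    have h1 := finrank_span_pair_le (F := F) y1 y2
    rw [h, finrank_top, hfr4] at h1; omega
  obtain ⟨j3, hj3⟩ := exists_single_not_mem h2top
  set d3 : Fin 4 → F := sv j3 with hd3def
  have h3top : span F {y1,y2,d3} ≠ ⊤ := by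
    intro h
    have h1 := finrank_span_triple_le (F := F) y1 y2 d3
    rw [h, finrank_top, hfr4] at h1; omega
  obtain ⟨j4, hj4⟩ := exists_single_not_mem h3top
  set d4 : Fin 4 → F := sv j4 with hd4def
  have hYrows : LinearIndependent F ![y1,y2,d3,d4] := indep_quad hy hj3 hj4
  set Yt : Matrix (Fin 4) (Fin 4) F := Matrix.of ![y1,y2,d3,d4] with hYt
  have hdetYt : Yt.det ≠ 0 := det_ne_zero_of_rows hYrows
  set Y : Matrix (Fin 4) (Fin 4) F := Ytᵀ with hYdef
  have hdetY : Y.det ≠ 0 := by rwa [hYdef, Matrix.det_transpose]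
  have hY : IsUnit Y.det := isUnit_iff_ne_zero.2 hdetY
  set pvec : Fin 4 → F := x1 ᵥ* Y with hpvec
  set qvec : Fin 4 → F := x2 ᵥ* Y with hqvec
  have hinj : Function.Injective (Matrix.vecMulLinear Y) :=
    Matrix.vecMul_injective_iff_isUnit.2 ((Matrix.isUnit_iff_isUnit_det Y).2 hY)
  have hpq : LinearIndependent F ![pvec, qvec] := by
    have := hx.map' (Matrix.vecMulLinear Y) (LinearMap.ker_eq_bot.2 hinj)
    rwa [comp_pair] at this
  obtain ⟨α, β, hR2⟩ : ∃ α β : F,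
      (sv 0 + α • sv 2 + β • sv 3 : Fin 4 → F) ∉ span F {pvec, qvec} := by
    by_contra hall; push_neg at hall
    have h0 : (sv 0 : Fin 4 → F) ∈ span F {pvec, qvec} := by
      have := hall 0 0; simpa using this
    have hs2 : (sv 2 : Fin 4 → F) ∈ span F {pvec, qvec} := by
      have h10 := hall 1 0
      have := Submodule.sub_mem _ h10 h0
      simpa using this
    have hs3 : (sv 3 : Fin 4 → F) ∈ span F {pvec, qvec} := by
      have h01 := hall 0 1
      have := Submodule.sub_mem _ h01 h0
      simpa using this
    have hle : span F {(sv 0 : Fin 4 → F), sv 2, sv 3} ≤ span F {pvec, qvec} := by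
      rw [span_le]
      intro x hx'
      simp only [Set.mem_insert_iff, Set.mem_singleton_iff] at hx'
      rcases hx' with rfl | rfl | rfl <;> assumption
    have hli : LinearIndependent F ![(sv 0 : Fin 4 → F), sv 2, sv 3] := by
      have := li_singles (F := F) ![0,2,3] (by decide)
      convert this using 1
      funext i; fin_cases i <;> simp
    have h3rk : Module.finrank F (span F {(sv 0 : Fin 4 → F), sv 2, sv 3}) = 3 := by
      rw [← range_triple, finrank_span_eq_card hli]; simp
    have hmono := Submodule.finrank_mono hle
    rw [h3rk] at hmono
    have := finrank_span_pair_le (F := F) pvec qvec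
    omega
  set R2 : Fin 4 → F := sv 0 + α • sv 2 + β • sv 3 with hR2def
  obtain ⟨γ, δ, hR3⟩ : ∃ γ δ : F,
      (sv 1 + γ • sv 2 + δ • sv 3 : Fin 4 → F) ∉ span F {pvec, qvec, R2} := by
    by_contra hall; push_neg at hall
    have h1 : (sv 1 : Fin 4 → F) ∈ span F {pvec, qvec, R2} := by
      have := hall 0 0; simpa using this
    have hs2 : (sv 2 : Fin 4 → F) ∈ span F {pvec, qvec, R2} := by
      have h10 := hall 1 0
      have := Submodule.sub_mem _ h10 h1
      simpa using this
    have hs3 : (sv 3 : Fin 4 → F) ∈ span F {pvec, qvec, R2} := by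
      have h01 := hall 0 1
      have := Submodule.sub_mem _ h01 h1
      simpa using this
    have hle : span F {(sv 1 : Fin 4 → F), sv 2, sv 3} ≤ span F {pvec, qvec, R2} := by
      rw [span_le]
      intro x hx'
      simp only [Set.mem_insert_iff, Set.mem_singleton_iff] at hx'
      rcases hx' with rfl | rfl | rfl <;> assumption
    have hli : LinearIndependent F ![(sv 1 : Fin 4 → F), sv 2, sv 3] := by
      have := li_singles (F := F) ![1,2,3] (by decide)
      convert this using 1
      funext i; fin_cases i <;> simp
    have h3rk : Module.finrank F (span F {(sv 1 : Fin 4 → F), sv 2, sv 3}) = 3 := by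
      rw [← range_triple, finrank_span_eq_card hli]; simp
    have heq : span F {(sv 1 : Fin 4 → F), sv 2, sv 3} = span F {pvec, qvec, R2} := by
      apply Submodule.eq_of_le_of_finrank_le hle
      rw [h3rk]
      exact finrank_span_triple_le _ _ _
    have hR2mem : R2 ∈ span F {(sv 1 : Fin 4 → F), sv 2, sv 3} := by
      rw [heq]
      exact subset_span (by simp)
    have hker : span F {(sv 1 : Fin 4 → F), sv 2, sv 3}
        ≤ LinearMap.ker (LinearMap.proj (R := F) (φ := fun _ : Fin 4 => F) 0) := by
      rw [span_le]
      intro x hx'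
      simp only [Set.mem_insert_iff, Set.mem_singleton_iff] at hx'
      rcases hx' with rfl | rfl | rfl <;> simp [LinearMap.mem_ker]
    have hz : R2 0 = 0 := hker hR2mem
    rw [hR2def] at hz
    simp at hz
  set R3 : Fin 4 → F := sv 1 + γ • sv 2 + δ • sv 3 with hR3def
  have hquad : LinearIndependent F ![pvec, qvec, R2, R3] := indep_quad hpq hR2 hR3
  set V : Matrix (Fin 4) (Fin 4) F := Matrix.of ![pvec, qvec, R2, R3] with hV
  have hdetV : V.det ≠ 0 := det_ne_zero_of_rows hquad
  have hrow : ∀ i, (V * Y⁻¹) i = (V i) ᵥ* Y⁻¹ := by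
    intro i; funext j; simp [Matrix.mul_apply, Matrix.vecMul, dotProduct]
  refine ⟨V * Y⁻¹, ?_, ?_, ?_, ?_, ?_⟩
  · rw [Matrix.det_mul]
    exact mul_ne_zero hdetV (Y.isUnit_nonsing_inv_det hY).ne_zero
  · rw [hrow]
    show (pvec) ᵥ* Y⁻¹ = x1
    rw [hpvec, Matrix.vecMul_vecMul, Matrix.mul_nonsing_inv _ hY, Matrix.vecMul_one]
  · rw [hrow]
    show (qvec) ᵥ* Y⁻¹ = x2
    rw [hqvec, Matrix.vecMul_vecMul, Matrix.mul_nonsing_inv _ hY, Matrix.vecMul_one]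
  · have hy1 : y1 = Y *ᵥ Pi.single 0 1 := by
      rw [Matrix.mulVec_single_one]; rfl
    rw [hy1, Matrix.mulVec_mulVec, Matrix.mul_assoc, Matrix.nonsing_inv_mul _ hY,
      Matrix.mul_one, Matrix.mulVec_single_one]
    funext i
    fin_cases i <;>
      simp (config := { decide := true }) [hV, hpvec, hqvec, hR2def, hR3def, hYdef, hYt,
        Matrix.vecMul, dotProduct, Fin.sum_univ_four]
  · have hy2 : y2 = Y *ᵥ Pi.single 1 1 := by
      rw [Matrix.mulVec_single_one]; rfl
    rw [hy2, Matrix.mulVec_mulVec, Matrix.mul_assoc, Matrix.nonsing_inv_mul _ hY,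
      Matrix.mul_one, Matrix.mulVec_single_one]
    funext i
    fin_cases i <;>
      simp (config := { decide := true }) [hV, hpvec, hqvec, hR2def, hR3def, hYdef, hYt,
        Matrix.vecMul, dotProduct, Fin.sum_univ_four]

end
section
variable {F : Type*} [Field F]
open Submodule Module

/-! ### Invariant predicates -/

def Q1 (S : Submodule F (Fin 8 → F)) : Prop := ∀ v ∈ S, yp v = 0
def Q2 (S : Submodule F (Fin 8 → F)) : Prop := ∀ v ∈ S, xp v = 0
def Q1x (S : Submodule F (Fin 8 → F)) : Prop := ∃ v ∈ S, v ≠ 0 ∧ yp v = 0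
def Q2x (S : Submodule F (Fin 8 → F)) : Prop := ∃ v ∈ S, v ≠ 0 ∧ xp v = 0
def PP (S : Submodule F (Fin 8 → F)) : Prop := ∀ v ∈ S, ∀ w ∈ S, xp v ⬝ᵥ yp w = 0

lemma orbit_fwd_Q1 {S T : Submodule F (Fin 8 → F)} (h : SameOrbit F S T) : Q1 S → Q1 T := by
  obtain ⟨r, a, hr, ha, hmap⟩ := h
  intro hq w hw
  rw [← hmap] at hw
  obtain ⟨v, hv, rfl⟩ := hw
  rw [vecMulLinear_apply', yp_e, hq v hv]
  simp

lemma orbit_fwd_Q2 {S T : Submodule F (Fin 8 → F)} (h : SameOrbit F S T) : Q2 S → Q2 T := by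
  obtain ⟨r, a, hr, ha, hmap⟩ := h
  intro hq w hw
  rw [← hmap] at hw
  obtain ⟨v, hv, rfl⟩ := hw
  rw [vecMulLinear_apply', xp_e, hq v hv]
  simp [Matrix.zero_vecMul]

lemma orbit_fwd_Q1x {S T : Submodule F (Fin 8 → F)} (h : SameOrbit F S T) : Q1x S → Q1x T := by
  obtain ⟨r, a, hr, ha, hmap⟩ := h
  rintro ⟨v, hv, hv0, hvy⟩
  refine ⟨v ᵥ* emap F r a, ?_, ?_, ?_⟩
  · rw [← hmap]; exact ⟨v, hv, rfl⟩
  · intro hz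
    apply hv0
    have := emap_inv_cancel hr ha v
    rw [hz, Matrix.zero_vecMul] at this
    exact this.symm
  · rw [yp_e, hvy]; simp

lemma orbit_fwd_Q2x {S T : Submodule F (Fin 8 → F)} (h : SameOrbit F S T) : Q2x S → Q2x T := by
  obtain ⟨r, a, hr, ha, hmap⟩ := h
  rintro ⟨v, hv, hv0, hvx⟩
  refine ⟨v ᵥ* emap F r a, ?_, ?_, ?_⟩
  · rw [← hmap]; exact ⟨v, hv, rfl⟩
  · intro hz
    apply hv0
    have := emap_inv_cancel hr ha v
    rw [hz, Matrix.zero_vecMul] at this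
    exact this.symm
  · rw [xp_e, hvx, Matrix.zero_vecMul]

lemma orbit_fwd_PP {S T : Submodule F (Fin 8 → F)} (h : SameOrbit F S T) : PP S → PP T := by
  obtain ⟨r, a, hr, ha, hmap⟩ := h
  intro hq w hw w' hw'
  rw [← hmap] at hw hw'
  obtain ⟨v, hv, rfl⟩ := hw
  obtain ⟨v', hv', rfl⟩ := hw'
  rw [vecMulLinear_apply', vecMulLinear_apply', xp_e, yp_e, dotProduct_smul,
    Matrix.dotProduct_mulVec, Matrix.vecMul_vecMul,
    Matrix.mul_nonsing_inv _ (isUnit_iff_ne_zero.2 hr), Matrix.vecMul_one,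
    hq v hv v' hv']
  simp

lemma orbit_iff_Q1 {S T : Submodule F (Fin 8 → F)} (h : SameOrbit F S T) : Q1 S ↔ Q1 T :=
  ⟨orbit_fwd_Q1 h, orbit_fwd_Q1 (sameOrbit_symm h)⟩
lemma orbit_iff_Q2 {S T : Submodule F (Fin 8 → F)} (h : SameOrbit F S T) : Q2 S ↔ Q2 T :=
  ⟨orbit_fwd_Q2 h, orbit_fwd_Q2 (sameOrbit_symm h)⟩
lemma orbit_iff_Q1x {S T : Submodule F (Fin 8 → F)} (h : SameOrbit F S T) : Q1x S ↔ Q1x T :=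
  ⟨orbit_fwd_Q1x h, orbit_fwd_Q1x (sameOrbit_symm h)⟩
lemma orbit_iff_Q2x {S T : Submodule F (Fin 8 → F)} (h : SameOrbit F S T) : Q2x S ↔ Q2x T :=
  ⟨orbit_fwd_Q2x h, orbit_fwd_Q2x (sameOrbit_symm h)⟩
lemma orbit_iff_PP {S T : Submodule F (Fin 8 → F)} (h : SameOrbit F S T) : PP S ↔ PP T :=
  ⟨orbit_fwd_PP h, orbit_fwd_PP (sameOrbit_symm h)⟩

lemma sep_Q1 {S T : Submodule F (Fin 8 → F)} (hso : SameOrbit F S T)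
    (h1 : Q1 S) (h2 : ¬ Q1 T) : False := h2 ((orbit_iff_Q1 hso).1 h1)
lemma sep_Q2 {S T : Submodule F (Fin 8 → F)} (hso : SameOrbit F S T)
    (h1 : Q2 S) (h2 : ¬ Q2 T) : False := h2 ((orbit_iff_Q2 hso).1 h1)
lemma sep_Q1x {S T : Submodule F (Fin 8 → F)} (hso : SameOrbit F S T)
    (h1 : Q1x S) (h2 : ¬ Q1x T) : False := h2 ((orbit_iff_Q1x hso).1 h1)
lemma sep_Q2x {S T : Submodule F (Fin 8 → F)} (hso : SameOrbit F S T)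
    (h1 : Q2x S) (h2 : ¬ Q2x T) : False := h2 ((orbit_iff_Q2x hso).1 h1)
lemma sep_PP {S T : Submodule F (Fin 8 → F)} (hso : SameOrbit F S T)
    (h1 : PP S) (h2 : ¬ PP T) : False := h2 ((orbit_iff_PP hso).1 h1)

/-! ### helpers for spans of pairs -/

lemma mem_pair_left (a b : Fin 8 → F) : a ∈ span F {a, b} :=
  subset_span (Set.mem_insert _ _)
lemma mem_pair_right (a b : Fin 8 → F) : b ∈ span F {a, b} :=
  subset_span (Set.mem_insert_iff.2 (Or.inr rfl))

lemma iso_pair {a b : Fin 8 → F} (haa : B8 F a a = 0) (hab : B8 F a b = 0)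
    (hbb : B8 F b b = 0) : TotallyIsotropic F (Submodule.span F {a,b}) := by
  intro v hv w hw
  rw [Submodule.mem_span_pair] at hv hw
  obtain ⟨s, t, rfl⟩ := hv
  obtain ⟨s', t', rfl⟩ := hw
  rw [B8_xy] at haa hab hbb ⊢
  simp only [xp_add, xp_smul, yp_add, yp_smul, add_dotProduct,
    dotProduct_add, smul_dotProduct, dotProduct_smul, smul_eq_mul]
  linear_combination (s*s') * haa + (s*t' + s'*t) * hab + (t*t') * hbb

lemma indep_of_coords {a b : Fin 8 → F} (i1 i2 : Fin 8) (h11 : a i1 = 1) (h12 : b i1 = 0)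
    (h21 : a i2 = 0) (h22 : b i2 = 1) : LinearIndependent F ![a, b] := by
  rw [LinearIndependent.pair_iff]
  intro s t h
  have e1 := congrFun h i1
  have e2 := congrFun h i2
  simp [h11, h12, h21, h22] at e1 e2
  exact ⟨e1, e2⟩

lemma Q1_span {a b : Fin 8 → F} (ha : yp a = 0) (hb : yp b = 0) :
    Q1 (span F {a,b}) := by
  intro v hv
  rw [Submodule.mem_span_pair] at hv
  obtain ⟨s, t, rfl⟩ := hv
  simp [ha, hb]

lemma Q2_span {a b : Fin 8 → F} (ha : xp a = 0) (hb : xp b = 0) :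
    Q2 (span F {a,b}) := by
  intro v hv
  rw [Submodule.mem_span_pair] at hv
  obtain ⟨s, t, rfl⟩ := hv
  simp [ha, hb]

lemma notQ1x_span {a b : Fin 8 → F} (j1 j2 : Fin 4) (h11 : yp a j1 = 1) (h12 : yp b j1 = 0)
    (h21 : yp a j2 = 0) (h22 : yp b j2 ≠ 0) : ¬ Q1x (span F {a,b}) := by
  rintro ⟨v, hv, hv0, hvy⟩
  rw [Submodule.mem_span_pair] at hv
  obtain ⟨s, t, rfl⟩ := hv
  have e1 : s • yp a + t • yp b = 0 := by
    rw [← yp_smul, ← yp_smul, ← yp_add, hvy]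
  have f1 := congrFun e1 j1
  have f2 := congrFun e1 j2
  simp [h11, h12, h21] at f1 f2
  rcases f2 with f2 | f2
  · subst f1; subst f2; simp at hv0
  · exact h22 f2

lemma notQ2x_span {a b : Fin 8 → F} (j1 j2 : Fin 4) (h11 : xp a j1 = 1) (h12 : xp b j1 = 0)
    (h21 : xp a j2 = 0) (h22 : xp b j2 ≠ 0) : ¬ Q2x (span F {a,b}) := by
  rintro ⟨v, hv, hv0, hvx⟩
  rw [Submodule.mem_span_pair] at hv
  obtain ⟨s, t, rfl⟩ := hv
  have e1 : s • xp a + t • xp b = 0 := by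
    rw [← xp_smul, ← xp_smul, ← xp_add, hvx]
  have f1 := congrFun e1 j1
  have f2 := congrFun e1 j2
  simp [h11, h12, h21] at f1 f2
  rcases f2 with f2 | f2
  · subst f1; subst f2; simp at hv0
  · exact h22 f2

lemma PP_span {a b : Fin 8 → F} (h1 : xp a ⬝ᵥ yp a = 0) (h2 : xp a ⬝ᵥ yp b = 0)
    (h3 : xp b ⬝ᵥ yp a = 0) (h4 : xp b ⬝ᵥ yp b = 0) : PP (span F {a,b}) := by
  intro v hv w hw
  rw [Submodule.mem_span_pair] at hv hw
  obtain ⟨s, t, rfl⟩ := hv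
  obtain ⟨s', t', rfl⟩ := hw
  simp only [xp_add, xp_smul, yp_add, yp_smul, add_dotProduct,
    dotProduct_add, smul_dotProduct, dotProduct_smul, smul_eq_mul]
  linear_combination (s*s') * h1 + (s*t') * h2 + (t*s') * h3 + (t*t') * h4

end
section
variable {F : Type*} [Field F]
open Submodule Module

def g11 : Fin 8 → F := ![1,0,0,0,0,0,0,0]
def g12 : Fin 8 → F := ![0,1,0,0,0,0,0,0]
def g21 : Fin 8 → F := ![0,0,0,0,0,0,0,1]
def g22 : Fin 8 → F := ![0,0,0,0,0,0,1,0]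
def g42 : Fin 8 → F := ![0,1,0,0,0,1,0,0]
def g52 : Fin 8 → F := ![0,0,1,0,0,0,1,0]
def g61 : Fin 8 → F := ![1,0,0,0,0,0,1,0]
def g62 : Fin 8 → F := ![0,1,0,0,0,0,0,-1]
def g71 : Fin 8 → F := ![1,0,0,0,0,1,0,0]
def g72 : Fin 8 → F := ![0,1,0,0,1,0,0,0]

@[simp] lemma xpg11 : xp (g11 : Fin 8 → F) = sv 0 := by funext j; fin_cases j <;> rfl
@[simp] lemma ypg11 : yp (g11 : Fin 8 → F) = 0 := by funext j; fin_cases j <;> rfl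
@[simp] lemma xpg12 : xp (g12 : Fin 8 → F) = sv 1 := by funext j; fin_cases j <;> rfl
@[simp] lemma ypg12 : yp (g12 : Fin 8 → F) = 0 := by funext j; fin_cases j <;> rfl
@[simp] lemma xpg21 : xp (g21 : Fin 8 → F) = 0 := by funext j; fin_cases j <;> rfl
@[simp] lemma ypg21 : yp (g21 : Fin 8 → F) = sv 0 := by funext j; fin_cases j <;> rfl
@[simp] lemma xpg22 : xp (g22 : Fin 8 → F) = 0 := by funext j; fin_cases j <;> rfl
@[simp] lemma ypg22 : yp (g22 : Fin 8 → F) = sv 1 := by funext j; fin_cases j <;> rfl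
@[simp] lemma xpg42 : xp (g42 : Fin 8 → F) = sv 1 := by funext j; fin_cases j <;> rfl
@[simp] lemma ypg42 : yp (g42 : Fin 8 → F) = sv 2 := by funext j; fin_cases j <;> rfl
@[simp] lemma xpg52 : xp (g52 : Fin 8 → F) = sv 2 := by funext j; fin_cases j <;> rfl
@[simp] lemma ypg52 : yp (g52 : Fin 8 → F) = sv 1 := by funext j; fin_cases j <;> rfl
@[simp] lemma xpg61 : xp (g61 : Fin 8 → F) = sv 0 := by funext j; fin_cases j <;> rfl
@[simp] lemma ypg61 : yp (g61 : Fin 8 → F) = sv 1 := by funext j; fin_cases j <;> rfl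
@[simp] lemma xpg62 : xp (g62 : Fin 8 → F) = sv 1 := by funext j; fin_cases j <;> rfl
@[simp] lemma ypg62 : yp (g62 : Fin 8 → F) = -sv 0 := by
  funext j; fin_cases j <;> simp [g62, yp, sv, Pi.single_apply] <;> rfl
@[simp] lemma xpg71 : xp (g71 : Fin 8 → F) = sv 0 := by funext j; fin_cases j <;> rfl
@[simp] lemma ypg71 : yp (g71 : Fin 8 → F) = sv 2 := by funext j; fin_cases j <;> rfl
@[simp] lemma xpg72 : xp (g72 : Fin 8 → F) = sv 1 := by funext j; fin_cases j <;> rfl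
@[simp] lemma ypg72 : yp (g72 : Fin 8 → F) = sv 3 := by funext j; fin_cases j <;> rfl

@[simp] lemma sv_dot_sv (j k : Fin 4) : (sv j : Fin 4 → F) ⬝ᵥ sv k = if j = k then 1 else 0 := by
  fin_cases j <;> fin_cases k <;>
    simp (config := { decide := true }) [dotProduct, Fin.sum_univ_four]

/-- the seven representatives -/
def TR : Fin 7 → Submodule F (Fin 8 → F)
  | ⟨0, _⟩ => span F {g11, g12}
  | ⟨1, _⟩ => span F {g21, g22}
  | ⟨2, _⟩ => span F {g11, g22}
  | ⟨3, _⟩ => span F {g11, g42}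
  | ⟨4, _⟩ => span F {g21, g52}
  | ⟨5, _⟩ => span F {g61, g62}
  | ⟨6, _⟩ => span F {g71, g72}

lemma iso_TR (k : Fin 7) : TotallyIsotropic F (TR k) := by
  rcases k with ⟨k, hk⟩
  interval_cases k <;>
    · apply iso_pair <;>
        simp (config := { decide := true }) [B8_xy, dotProduct_zero,
          zero_dotProduct]

lemma finrank_TR (k : Fin 7) : Module.finrank F ↥(TR (F := F) k) = 2 := by
  rcases k with ⟨k, hk⟩
  interval_cases k <;>
    · apply finrank_span_pair_eq_two
      first
      | exact indep_of_coords 0 1 rfl rfl rfl rfl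
      | exact indep_of_coords 7 6 rfl rfl rfl rfl
      | exact indep_of_coords 0 6 rfl rfl rfl rfl
      | exact indep_of_coords 7 2 rfl rfl rfl rfl
end
section
variable {F : Type*} [Field F]
open Submodule Module

lemma sv_ne_zero (j : Fin 4) : (sv j : Fin 4 → F) ≠ 0 := fun h => by
  have := congrFun h j; simp at this

lemma notQ1_span_right {a b : Fin 8 → F} (h : yp b ≠ 0) : ¬ Q1 (span F {a,b}) :=
  fun hq => h (hq b (mem_pair_right a b))
lemma notQ2_span_left {a b : Fin 8 → F} (h : xp a ≠ 0) : ¬ Q2 (span F {a,b}) :=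
  fun hq => h (hq a (mem_pair_left a b))
lemma ne_zero_of_coord {v : Fin 8 → F} (i : Fin 8) (h : v i = 1) : v ≠ 0 :=
  fun hz => by rw [hz] at h; simp at h

lemma Q1pos : Q1 (span F {(g11 : Fin 8 → F), g12}) := Q1_span ypg11 ypg12
lemma Q2pos : Q2 (span F {(g21 : Fin 8 → F), g22}) := Q2_span xpg21 xpg22
lemma Q1neg1 : ¬ Q1 (span F {(g21 : Fin 8 → F), g22}) :=
  notQ1_span_right (by rw [ypg22]; exact sv_ne_zero _)
lemma Q1neg2 : ¬ Q1 (span F {(g11 : Fin 8 → F), g22}) :=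
  notQ1_span_right (by rw [ypg22]; exact sv_ne_zero _)
lemma Q1neg3 : ¬ Q1 (span F {(g11 : Fin 8 → F), g42}) :=
  notQ1_span_right (by rw [ypg42]; exact sv_ne_zero _)
lemma Q1neg4 : ¬ Q1 (span F {(g21 : Fin 8 → F), g52}) :=
  notQ1_span_right (by rw [ypg52]; exact sv_ne_zero _)
lemma Q1neg5 : ¬ Q1 (span F {(g61 : Fin 8 → F), g62}) :=
  notQ1_span_right (by rw [ypg62]; simpa using (neg_ne_zero.2 (sv_ne_zero _)))
lemma Q1neg6 : ¬ Q1 (span F {(g71 : Fin 8 → F), g72}) :=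
  notQ1_span_right (by rw [ypg72]; exact sv_ne_zero _)
lemma Q2neg2 : ¬ Q2 (span F {(g11 : Fin 8 → F), g22}) :=
  notQ2_span_left (by rw [xpg11]; exact sv_ne_zero _)
lemma Q2neg3 : ¬ Q2 (span F {(g11 : Fin 8 → F), g42}) :=
  notQ2_span_left (by rw [xpg11]; exact sv_ne_zero _)
lemma Q2neg4 : ¬ Q2 (span F {(g21 : Fin 8 → F), g52}) := by
  intro hq
  have h := hq g52 (mem_pair_right _ _)
  rw [xpg52] at h
  exact sv_ne_zero _ h
lemma Q2neg5 : ¬ Q2 (span F {(g61 : Fin 8 → F), g62}) :=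
  notQ2_span_left (by rw [xpg61]; exact sv_ne_zero _)
lemma Q2neg6 : ¬ Q2 (span F {(g71 : Fin 8 → F), g72}) :=
  notQ2_span_left (by rw [xpg71]; exact sv_ne_zero _)

lemma Q1xpos2 : Q1x (span F {(g11 : Fin 8 → F), g22}) :=
  ⟨g11, mem_pair_left _ _, ne_zero_of_coord 0 rfl, ypg11⟩
lemma Q1xpos3 : Q1x (span F {(g11 : Fin 8 → F), g42}) :=
  ⟨g11, mem_pair_left _ _, ne_zero_of_coord 0 rfl, ypg11⟩
lemma Q1xneg4 : ¬ Q1x (span F {(g21 : Fin 8 → F), g52}) :=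
  notQ1x_span 0 1 rfl rfl rfl one_ne_zero
lemma Q1xneg5 : ¬ Q1x (span F {(g61 : Fin 8 → F), g62}) :=
  notQ1x_span 1 0 rfl rfl rfl (neg_ne_zero.2 one_ne_zero)
lemma Q1xneg6 : ¬ Q1x (span F {(g71 : Fin 8 → F), g72}) :=
  notQ1x_span 2 3 rfl rfl rfl one_ne_zero
lemma Q2xpos2 : Q2x (span F {(g11 : Fin 8 → F), g22}) :=
  ⟨g22, mem_pair_right _ _, ne_zero_of_coord 6 rfl, xpg22⟩
lemma Q2xpos4 : Q2x (span F {(g21 : Fin 8 → F), g52}) :=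
  ⟨g21, mem_pair_left _ _, ne_zero_of_coord 7 rfl, xpg21⟩
lemma Q2xneg3 : ¬ Q2x (span F {(g11 : Fin 8 → F), g42}) :=
  notQ2x_span 0 1 rfl rfl rfl one_ne_zero
lemma Q2xneg5 : ¬ Q2x (span F {(g61 : Fin 8 → F), g62}) :=
  notQ2x_span 0 1 rfl rfl rfl one_ne_zero
lemma Q2xneg6 : ¬ Q2x (span F {(g71 : Fin 8 → F), g72}) :=
  notQ2x_span 0 1 rfl rfl rfl one_ne_zero
lemma PPpos6 : PP (span F {(g71 : Fin 8 → F), g72}) :=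
  PP_span (by simp) (by simp) (by simp) (by simp)
lemma PPneg5 : ¬ PP (span F {(g61 : Fin 8 → F), g62}) := fun hp => by
  have := hp g61 (mem_pair_left _ _) g62 (mem_pair_right _ _)
  rw [xpg61, ypg62, dotProduct_neg] at this
  simp at this

lemma sep_TR (k l : Fin 7) (hne : k ≠ l) : ¬ SameOrbit F (TR k) (TR l) := by
  rcases k with ⟨k, hk⟩
  rcases l with ⟨l, hl⟩
  interval_cases k <;> interval_cases l
  · exact absurd rfl hne
  · exact fun hso => sep_Q1 hso Q1pos Q1neg1
  · exact fun hso => sep_Q1 hso Q1pos Q1neg2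
  · exact fun hso => sep_Q1 hso Q1pos Q1neg3
  · exact fun hso => sep_Q1 hso Q1pos Q1neg4
  · exact fun hso => sep_Q1 hso Q1pos Q1neg5
  · exact fun hso => sep_Q1 hso Q1pos Q1neg6
  · exact fun hso => sep_Q1 (sameOrbit_symm hso) Q1pos Q1neg1
  · exact absurd rfl hne
  · exact fun hso => sep_Q2 hso Q2pos Q2neg2
  · exact fun hso => sep_Q2 hso Q2pos Q2neg3
  · exact fun hso => sep_Q2 hso Q2pos Q2neg4
  · exact fun hso => sep_Q2 hso Q2pos Q2neg5
  · exact fun hso => sep_Q2 hso Q2pos Q2neg6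
  · exact fun hso => sep_Q1 (sameOrbit_symm hso) Q1pos Q1neg2
  · exact fun hso => sep_Q2 (sameOrbit_symm hso) Q2pos Q2neg2
  · exact absurd rfl hne
  · exact fun hso => sep_Q2x hso Q2xpos2 Q2xneg3
  · exact fun hso => sep_Q1x hso Q1xpos2 Q1xneg4
  · exact fun hso => sep_Q1x hso Q1xpos2 Q1xneg5
  · exact fun hso => sep_Q1x hso Q1xpos2 Q1xneg6
  · exact fun hso => sep_Q1 (sameOrbit_symm hso) Q1pos Q1neg3
  · exact fun hso => sep_Q2 (sameOrbit_symm hso) Q2pos Q2neg3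
  · exact fun hso => sep_Q2x (sameOrbit_symm hso) Q2xpos2 Q2xneg3
  · exact absurd rfl hne
  · exact fun hso => sep_Q1x hso Q1xpos3 Q1xneg4
  · exact fun hso => sep_Q1x hso Q1xpos3 Q1xneg5
  · exact fun hso => sep_Q1x hso Q1xpos3 Q1xneg6
  · exact fun hso => sep_Q1 (sameOrbit_symm hso) Q1pos Q1neg4
  · exact fun hso => sep_Q2 (sameOrbit_symm hso) Q2pos Q2neg4
  · exact fun hso => sep_Q1x (sameOrbit_symm hso) Q1xpos2 Q1xneg4
  · exact fun hso => sep_Q1x (sameOrbit_symm hso) Q1xpos3 Q1xneg4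
  · exact absurd rfl hne
  · exact fun hso => sep_Q2x hso Q2xpos4 Q2xneg5
  · exact fun hso => sep_Q2x hso Q2xpos4 Q2xneg6
  · exact fun hso => sep_Q1 (sameOrbit_symm hso) Q1pos Q1neg5
  · exact fun hso => sep_Q2 (sameOrbit_symm hso) Q2pos Q2neg5
  · exact fun hso => sep_Q1x (sameOrbit_symm hso) Q1xpos2 Q1xneg5
  · exact fun hso => sep_Q1x (sameOrbit_symm hso) Q1xpos3 Q1xneg5
  · exact fun hso => sep_Q2x (sameOrbit_symm hso) Q2xpos4 Q2xneg5
  · exact absurd rfl hne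
  · exact fun hso => sep_PP (sameOrbit_symm hso) PPpos6 PPneg5
  · exact fun hso => sep_Q1 (sameOrbit_symm hso) Q1pos Q1neg6
  · exact fun hso => sep_Q2 (sameOrbit_symm hso) Q2pos Q2neg6
  · exact fun hso => sep_Q1x (sameOrbit_symm hso) Q1xpos2 Q1xneg6
  · exact fun hso => sep_Q1x (sameOrbit_symm hso) Q1xpos3 Q1xneg6
  · exact fun hso => sep_Q2x (sameOrbit_symm hso) Q2xpos4 Q2xneg6
  · exact fun hso => sep_PP hso PPpos6 PPneg5
  · exact absurd rfl hne

end
section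
variable {F : Type*} [Field F]
open Submodule Module

@[simp] lemma cv40 (a b c d : F) : ![a,b,c,d] 0 = a := rfl
@[simp] lemma cv41 (a b c d : F) : ![a,b,c,d] 1 = b := rfl
@[simp] lemma cv42 (a b c d : F) : ![a,b,c,d] 2 = c := rfl
@[simp] lemma cv43' (a b c d : F) : ![a,b,c,d] 3 = d := rfl

lemma li_sv_pair (i j : Fin 4) (hij : i ≠ j) :
    LinearIndependent F ![(sv i : Fin 4 → F), sv j] := by
  have h1 := li_singles (F := F) ![i, j] (by
    intro a b hab
    fin_cases a <;> fin_cases b <;> simp_all <;> exact absurd hab hij)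
  have h2 : (fun k => (sv (![i,j] k) : Fin 4 → F)) = ![sv i, sv j] := by
    funext k; fin_cases k <;> simp
  rwa [h2] at h1

lemma extend1 {x : Fin 4 → F} (hx : x ≠ 0) : ∃ u, LinearIndependent F ![x, u] := by
  have hne : span F {x} ≠ ⊤ := by
    intro h
    have h1 : Module.finrank F (span F ({x} : Set (Fin 4 → F))) = 1 :=
      finrank_span_singleton hx
    rw [h, finrank_top, Module.finrank_fin_fun (R := F)] at h1
    omega
  obtain ⟨j, hj⟩ := exists_single_not_mem hne
  refine ⟨sv j, ?_⟩
  rw [LinearIndependent.pair_iff' hx]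
  intro a ha
  exact hj (ha ▸ Submodule.smul_mem _ a (subset_span rfl))

@[simp] lemma sv_dot (j : Fin 4) (w : Fin 4 → F) : (sv j : Fin 4 → F) ⬝ᵥ w = w j := by
  simp [sv, single_dotProduct]

lemma sv_vecMul (j : Fin 4) (B : Matrix (Fin 4) (Fin 4) F) : (sv j : Fin 4 → F) ᵥ* B = B j := by
  simp [sv, Matrix.single_one_vecMul, Matrix.row]

lemma row_mul (A B : Matrix (Fin 4) (Fin 4) F) (i : Fin 4) : (A * B) i = (A i) ᵥ* B := by
  funext j; simp [Matrix.mul_apply, Matrix.vecMul, dotProduct]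

lemma mulVec_pt (A : Matrix (Fin 4) (Fin 4) F) (w : Fin 4 → F) (i : Fin 4) :
    (A *ᵥ w) i = (A i) ⬝ᵥ w := rfl

lemma inv_col {r : Matrix (Fin 4) (Fin 4) F} (hr : r.det ≠ 0) {y z : Fin 4 → F}
    (h : r *ᵥ y = z) : r⁻¹ *ᵥ z = y := by
  rw [← h, Matrix.mulVec_mulVec, Matrix.nonsing_inv_mul _ (isUnit_iff_ne_zero.2 hr),
    Matrix.one_mulVec]

lemma image_xy {g : Fin 8 → F} {r : Matrix (Fin 4) (Fin 4) F} {a : F} {u w : Fin 4 → F}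
    (hx : (xp g) ᵥ* r = u) (hy : a • (r⁻¹ *ᵥ yp g) = w) :
    g ᵥ* emap F r a = glue u w := by
  apply ext_xy
  · rw [xp_glue, xp_e, hx]
  · rw [yp_glue, yp_e, hy]

lemma orbit_of_images {ga gb v1 v2 : Fin 8 → F} {r : Matrix (Fin 4) (Fin 4) F} {a : F}
    (hr : r.det ≠ 0) (ha : a ≠ 0)
    (h1 : ga ᵥ* emap F r a = v1) (h2 : gb ᵥ* emap F r a = v2) :
    SameOrbit F (span F {ga, gb}) (span F {v1, v2}) := by
  refine ⟨r, a, hr, ha, ?_⟩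
  rw [Submodule.map_span]
  congr 1
  rw [Set.image_insert_eq, Set.image_singleton]
  rw [vecMulLinear_apply', vecMulLinear_apply', h1, h2]

end

section
variable {F : Type*} [Field F]
open Submodule Module

lemma notin_pair_coord {a b x : Fin 4 → F} (j : Fin 4) (ha : a j = 0) (hb : b j = 0)
    (hx : x j ≠ 0) : x ∉ span F {a, b} := by
  intro hmem
  have hle : span F {a, b} ≤ LinearMap.ker (LinearMap.proj (R := F) (φ := fun _ : Fin 4 => F) j) := by
    rw [span_le]
    intro y hy
    simp only [Set.mem_insert_iff, Set.mem_singleton_iff] at hy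
    rcases hy with rfl | rfl <;> simp [LinearMap.mem_ker, ha, hb]
  exact hx (hle hmem)

lemma notin_triple_coord {a b c x : Fin 4 → F} (j : Fin 4) (ha : a j = 0) (hb : b j = 0)
    (hc : c j = 0) (hx : x j ≠ 0) : x ∉ span F {a, b, c} := by
  intro hmem
  have hle : span F {a, b, c} ≤ LinearMap.ker (LinearMap.proj (R := F) (φ := fun _ : Fin 4 => F) j) := by
    rw [span_le]
    intro y hy
    simp only [Set.mem_insert_iff, Set.mem_singleton_iff] at hy
    rcases hy with rfl | rfl | rfl <;> simp [LinearMap.mem_ker, ha, hb, hc]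
  exact hx (hle hmem)

end
section
variable {F : Type*} [Field F]
open Submodule Module

set_option maxHeartbeats 2000000

lemma case0 {v1 v2 : Fin 8 → F} (hx : LinearIndependent F ![xp v1, xp v2])
    (hy1 : yp v1 = 0) (hy2 : yp v2 = 0) :
    SameOrbit F (span F {(g11 : Fin 8 → F), g12}) (span F {v1, v2}) := by
  obtain ⟨r, hdet, hr0, hr1, -, -⟩ := UL hx (li_sv_pair 0 1 (by decide))
  refine orbit_of_images hdet one_ne_zero ?_ ?_
  · rw [image_xy (u := xp v1) (w := yp v1) ?_ ?_, glue_xy]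
    · rw [xpg11, sv_vecMul, hr0]
    · rw [ypg11, Matrix.mulVec_zero, smul_zero, hy1]
  · rw [image_xy (u := xp v2) (w := yp v2) ?_ ?_, glue_xy]
    · rw [xpg12, sv_vecMul, hr1]
    · rw [ypg12, Matrix.mulVec_zero, smul_zero, hy2]

lemma case1 {v1 v2 : Fin 8 → F} (hy : LinearIndependent F ![yp v1, yp v2])
    (hx1 : xp v1 = 0) (hx2 : xp v2 = 0) :
    SameOrbit F (span F {(g21 : Fin 8 → F), g22}) (span F {v1, v2}) := by
  obtain ⟨r0, hdet0, -, -, hm1, hm2⟩ := UL (li_sv_pair 0 1 (by decide)) hy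
  simp only [sv_dot] at hm1 hm2
  set p := yp v1 0; set q := yp v1 1; set s := yp v2 0; set t := yp v2 1
  set A : Matrix (Fin 4) (Fin 4) F :=
    Matrix.of ![sv 2, sv 3, sv 0 - p • sv 2 - s • sv 3, sv 1 - q • sv 2 - t • sv 3] with hA
  have hA0 : A 0 = sv 2 := rfl
  have hA1 : A 1 = sv 3 := rfl
  have hA2 : A 2 = sv 0 - p • sv 2 - s • sv 3 := rfl
  have hA3 : A 3 = sv 1 - q • sv 2 - t • sv 3 := rfl
  have hAdet : A.det ≠ 0 :=
    det_ne_zero_of_rows (indep_quad (li_sv_pair 2 3 (by decide))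
      (notin_pair_coord 0 (by simp) (by simp) (by simp))
      (notin_triple_coord 1 (by simp) (by simp) (by simp) (by simp)))
  have hdet' : (A * r0).det ≠ 0 := by
    rw [Matrix.det_mul]; exact mul_ne_zero hAdet hdet0
  have hv1 : (A * r0) *ᵥ yp v1 = sv 0 := by
    rw [← Matrix.mulVec_mulVec, hm1]
    funext i
    fin_cases i <;>
      simp (config := { decide := true }) [mulVec_pt, hA0, hA1, hA2, hA3,
        dotProduct, Fin.sum_univ_four, Pi.sub_apply, Pi.smul_apply, Pi.add_apply] <;>
      ring
  have hv2 : (A * r0) *ᵥ yp v2 = sv 1 := by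
    rw [← Matrix.mulVec_mulVec, hm2]
    funext i
    fin_cases i <;>
      simp (config := { decide := true }) [mulVec_pt, hA0, hA1, hA2, hA3,
        dotProduct, Fin.sum_univ_four, Pi.sub_apply, Pi.smul_apply, Pi.add_apply] <;>
      ring
  refine orbit_of_images hdet' one_ne_zero ?_ ?_
  · rw [image_xy (u := xp v1) (w := yp v1) ?_ ?_, glue_xy]
    · rw [xpg21, Matrix.zero_vecMul, hx1]
    · rw [ypg21, one_smul, inv_col hdet' hv1]
  · rw [image_xy (u := xp v2) (w := yp v2) ?_ ?_, glue_xy]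
    · rw [xpg22, Matrix.zero_vecMul, hx2]
    · rw [ypg22, one_smul, inv_col hdet' hv2]

lemma case2 {v1 v2 : Fin 8 → F} (hx1 : xp v1 ≠ 0) (hy1 : yp v1 = 0)
    (hx2 : xp v2 = 0) (hy2 : yp v2 ≠ 0) (hiso : xp v1 ⬝ᵥ yp v2 = 0) :
    SameOrbit F (span F {(g11 : Fin 8 → F), g22}) (span F {v1, v2}) := by
  obtain ⟨xpad, hxp⟩ := extend1 hx1
  obtain ⟨ypad, hyp⟩ := extend1 hy2
  obtain ⟨r0, hdet0, hr0, -, hm1, -⟩ := UL hxp hyp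
  rw [hiso] at hm1
  set q := xpad ⬝ᵥ yp v2 with hq
  set A : Matrix (Fin 4) (Fin 4) F :=
    Matrix.of ![sv 0, sv 2, sv 1 - q • sv 2, sv 3] with hA
  have hA0 : A 0 = sv 0 := rfl
  have hA1 : A 1 = sv 2 := rfl
  have hA2 : A 2 = sv 1 - q • sv 2 := rfl
  have hA3 : A 3 = sv 3 := rfl
  have hAdet : A.det ≠ 0 :=
    det_ne_zero_of_rows (indep_quad (li_sv_pair 0 2 (by decide))
      (notin_pair_coord 1 (by simp) (by simp) (by simp))
      (notin_triple_coord 3 (by simp) (by simp) (by simp) (by simp)))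
  have hdet' : (A * r0).det ≠ 0 := by
    rw [Matrix.det_mul]; exact mul_ne_zero hAdet hdet0
  have hrow0 : (A * r0) 0 = xp v1 := by
    rw [row_mul, hA0, sv_vecMul, hr0]
  have hv2 : (A * r0) *ᵥ yp v2 = sv 1 := by
    rw [← Matrix.mulVec_mulVec, hm1]
    funext i
    fin_cases i <;>
      simp (config := { decide := true }) [mulVec_pt, hA0, hA1, hA2, hA3,
        dotProduct, Fin.sum_univ_four, Pi.sub_apply, Pi.smul_apply, Pi.add_apply] <;>
      ring
  refine orbit_of_images hdet' one_ne_zero ?_ ?_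
  · rw [image_xy (u := xp v1) (w := yp v1) ?_ ?_, glue_xy]
    · rw [xpg11, sv_vecMul, hrow0]
    · rw [ypg11, Matrix.mulVec_zero, smul_zero, hy1]
  · rw [image_xy (u := xp v2) (w := yp v2) ?_ ?_, glue_xy]
    · rw [xpg22, Matrix.zero_vecMul, hx2]
    · rw [ypg22, one_smul, inv_col hdet' hv2]

lemma case3 {v1 v2 : Fin 8 → F} (hx : LinearIndependent F ![xp v1, xp v2])
    (hy1 : yp v1 = 0) (hy2 : yp v2 ≠ 0)
    (h12 : xp v1 ⬝ᵥ yp v2 = 0) (h22 : xp v2 ⬝ᵥ yp v2 = 0) :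
    SameOrbit F (span F {(g11 : Fin 8 → F), g42}) (span F {v1, v2}) := by
  obtain ⟨ypad, hyp⟩ := extend1 hy2
  obtain ⟨r0, hdet0, hr0, hr1, hm1, -⟩ := UL hx hyp
  rw [h12, h22] at hm1
  have hm1' : r0 *ᵥ yp v2 = sv 2 := by
    rw [hm1]; funext i; fin_cases i <;> simp (config := { decide := true })
  refine orbit_of_images hdet0 one_ne_zero ?_ ?_
  · rw [image_xy (u := xp v1) (w := yp v1) ?_ ?_, glue_xy]
    · rw [xpg11, sv_vecMul, hr0]
    · rw [ypg11, Matrix.mulVec_zero, smul_zero, hy1]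
  · rw [image_xy (u := xp v2) (w := yp v2) ?_ ?_, glue_xy]
    · rw [xpg42, sv_vecMul, hr1]
    · rw [ypg42, one_smul, inv_col hdet0 hm1']

lemma case4 {v1 v2 : Fin 8 → F} (hy : LinearIndependent F ![yp v1, yp v2])
    (hx1 : xp v1 = 0) (hx2 : xp v2 ≠ 0)
    (h21 : xp v2 ⬝ᵥ yp v1 = 0) (h22 : xp v2 ⬝ᵥ yp v2 = 0) :
    SameOrbit F (span F {(g21 : Fin 8 → F), g52}) (span F {v1, v2}) := by
  obtain ⟨xpad, hxp⟩ := extend1 hx2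
  obtain ⟨r0, hdet0, hr0, -, hm1, hm2⟩ := UL hxp hy
  rw [h21] at hm1
  rw [h22] at hm2
  set p := xpad ⬝ᵥ yp v1 with hp
  set q := xpad ⬝ᵥ yp v2 with hq
  set A : Matrix (Fin 4) (Fin 4) F :=
    Matrix.of ![sv 2, sv 3, sv 0, sv 1 - p • sv 2 - q • sv 3] with hA
  have hA0 : A 0 = sv 2 := rfl
  have hA1 : A 1 = sv 3 := rfl
  have hA2 : A 2 = sv 0 := rfl
  have hA3 : A 3 = sv 1 - p • sv 2 - q • sv 3 := rfl
  have hAdet : A.det ≠ 0 :=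
    det_ne_zero_of_rows (indep_quad (li_sv_pair 2 3 (by decide))
      (notin_pair_coord 0 (by simp) (by simp) (by simp))
      (notin_triple_coord 1 (by simp) (by simp) (by simp) (by simp)))
  have hdet' : (A * r0).det ≠ 0 := by
    rw [Matrix.det_mul]; exact mul_ne_zero hAdet hdet0
  have hrow2 : (A * r0) 2 = xp v2 := by
    rw [row_mul, hA2, sv_vecMul, hr0]
  have hv1 : (A * r0) *ᵥ yp v1 = sv 0 := by
    rw [← Matrix.mulVec_mulVec, hm1]
    funext i
    fin_cases i <;>
      simp (config := { decide := true }) [mulVec_pt, hA0, hA1, hA2, hA3,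
        dotProduct, Fin.sum_univ_four, Pi.sub_apply, Pi.smul_apply, Pi.add_apply] <;>
      ring
  have hv2 : (A * r0) *ᵥ yp v2 = sv 1 := by
    rw [← Matrix.mulVec_mulVec, hm2]
    funext i
    fin_cases i <;>
      simp (config := { decide := true }) [mulVec_pt, hA0, hA1, hA2, hA3,
        dotProduct, Fin.sum_univ_four, Pi.sub_apply, Pi.smul_apply, Pi.add_apply] <;>
      ring
  refine orbit_of_images hdet' one_ne_zero ?_ ?_
  · rw [image_xy (u := xp v1) (w := yp v1) ?_ ?_, glue_xy]
    · rw [xpg21, Matrix.zero_vecMul, hx1]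
    · rw [ypg21, one_smul, inv_col hdet' hv1]
  · rw [image_xy (u := xp v2) (w := yp v2) ?_ ?_, glue_xy]
    · rw [xpg52, sv_vecMul, hrow2]
    · rw [ypg52, one_smul, inv_col hdet' hv2]

lemma case5 {v1 v2 : Fin 8 → F} (hx : LinearIndependent F ![xp v1, xp v2])
    (hy : LinearIndependent F ![yp v1, yp v2]) {c : F} (hcne : c ≠ 0)
    (h11 : xp v1 ⬝ᵥ yp v1 = 0) (h22 : xp v2 ⬝ᵥ yp v2 = 0)
    (h12 : xp v1 ⬝ᵥ yp v2 = c) (h21 : xp v2 ⬝ᵥ yp v1 = -c) :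
    SameOrbit F (span F {(g61 : Fin 8 → F), g62}) (span F {v1, v2}) := by
  obtain ⟨r0, hdet0, hr0, hr1, hm1, hm2⟩ := UL hx hy
  rw [h11, h21] at hm1
  rw [h12, h22] at hm2
  set A : Matrix (Fin 4) (Fin 4) F :=
    Matrix.of ![sv 0, sv 1, sv 1 + c • sv 2, sv 0 - c • sv 3] with hA
  have hA0 : A 0 = sv 0 := rfl
  have hA1 : A 1 = sv 1 := rfl
  have hA2 : A 2 = sv 1 + c • sv 2 := rfl
  have hA3 : A 3 = sv 0 - c • sv 3 := rfl
  have hAdet : A.det ≠ 0 :=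
    det_ne_zero_of_rows (indep_quad (li_sv_pair 0 1 (by decide))
      (notin_pair_coord 2 (by simp) (by simp) (by simpa using hcne))
      (notin_triple_coord 3 (by simp) (by simp) (by simp)
        (by simpa using neg_ne_zero.2 hcne)))
  have hdet' : (A * r0).det ≠ 0 := by
    rw [Matrix.det_mul]; exact mul_ne_zero hAdet hdet0
  have hrow0 : (A * r0) 0 = xp v1 := by rw [row_mul, hA0, sv_vecMul, hr0]
  have hrow1 : (A * r0) 1 = xp v2 := by rw [row_mul, hA1, sv_vecMul, hr1]
  have hv1 : (A * r0) *ᵥ yp v1 = (-c) • sv 1 := by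
    rw [← Matrix.mulVec_mulVec, hm1]
    funext i
    fin_cases i <;>
      simp (config := { decide := true }) [mulVec_pt, hA0, hA1, hA2, hA3,
        dotProduct, Fin.sum_univ_four, Pi.sub_apply, Pi.smul_apply, Pi.add_apply] <;>
      ring
  have hv2 : (A * r0) *ᵥ yp v2 = c • sv 0 := by
    rw [← Matrix.mulVec_mulVec, hm2]
    funext i
    fin_cases i <;>
      simp (config := { decide := true }) [mulVec_pt, hA0, hA1, hA2, hA3,
        dotProduct, Fin.sum_univ_four, Pi.sub_apply, Pi.smul_apply, Pi.add_apply] <;>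
      ring
  refine orbit_of_images hdet' (neg_ne_zero.2 hcne) ?_ ?_
  · rw [image_xy (u := xp v1) (w := yp v1) ?_ ?_, glue_xy]
    · rw [xpg61, sv_vecMul, hrow0]
    · rw [ypg61, ← Matrix.mulVec_smul, inv_col hdet' hv1]
  · rw [image_xy (u := xp v2) (w := yp v2) ?_ ?_, glue_xy]
    · rw [xpg62, sv_vecMul, hrow1]
    · rw [ypg62, Matrix.mulVec_neg, smul_neg, neg_smul, neg_neg, ← Matrix.mulVec_smul,
        inv_col hdet' hv2]

lemma case6 {v1 v2 : Fin 8 → F} (hx : LinearIndependent F ![xp v1, xp v2])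
    (hy : LinearIndependent F ![yp v1, yp v2])
    (h11 : xp v1 ⬝ᵥ yp v1 = 0) (h22 : xp v2 ⬝ᵥ yp v2 = 0)
    (h12 : xp v1 ⬝ᵥ yp v2 = 0) (h21 : xp v2 ⬝ᵥ yp v1 = 0) :
    SameOrbit F (span F {(g71 : Fin 8 → F), g72}) (span F {v1, v2}) := by
  obtain ⟨r0, hdet0, hr0, hr1, hm1, hm2⟩ := UL hx hy
  rw [h11, h21] at hm1
  rw [h12, h22] at hm2
  have hv1 : r0 *ᵥ yp v1 = sv 2 := by
    rw [hm1]; funext i; fin_cases i <;> simp (config := { decide := true })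
  have hv2 : r0 *ᵥ yp v2 = sv 3 := by
    rw [hm2]; funext i; fin_cases i <;> simp (config := { decide := true })
  refine orbit_of_images hdet0 one_ne_zero ?_ ?_
  · rw [image_xy (u := xp v1) (w := yp v1) ?_ ?_, glue_xy]
    · rw [xpg71, sv_vecMul, hr0]
    · rw [ypg71, one_smul, inv_col hdet0 hv1]
  · rw [image_xy (u := xp v2) (w := yp v2) ?_ ?_, glue_xy]
    · rw [xpg72, sv_vecMul, hr1]
    · rw [ypg72, one_smul, inv_col hdet0 hv2]

end
section
variable {F : Type*} [Field F]
open Submodule Module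

lemma eq_zero_xy {v : Fin 8 → F} (hx : xp v = 0) (hy : yp v = 0) : v = 0 :=
  ext_xy (by simpa using hx) (by simpa using hy)

lemma half (h2 : (2:F) ≠ 0) {x : F} (h : x + x = 0) : x = 0 := by
  have hx : (2:F) * x = 0 := by linear_combination h
  exact (mul_eq_zero.1 hx).resolve_left h2

lemma iso_dots {S : Submodule F (Fin 8 → F)} (hiso : TotallyIsotropic F S)
    {a b : Fin 8 → F} (ha : a ∈ S) (hb : b ∈ S) :
    xp a ⬝ᵥ yp b + xp b ⬝ᵥ yp a = 0 := by
  have := hiso a ha b hb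
  rwa [B8_xy] at this

lemma iso_self (h2 : (2:F) ≠ 0) {S : Submodule F (Fin 8 → F)} (hiso : TotallyIsotropic F S)
    {a : Fin 8 → F} (ha : a ∈ S) : xp a ⬝ᵥ yp a = 0 :=
  half h2 (iso_dots hiso ha ha)

lemma exists_basis_pair (S : Submodule F (Fin 8 → F)) (hrk : Module.finrank F ↥S = 2) :
    ∃ v1 v2 : Fin 8 → F, LinearIndependent F ![v1, v2] ∧ S = span F {v1, v2} := by
  let b := Module.finBasisOfFinrankEq F ↥S hrk
  have h3 : (⇑S.subtype ∘ ⇑b) = ![(b 0 : Fin 8 → F), (b 1 : Fin 8 → F)] := by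
    funext i; fin_cases i <;> rfl
  refine ⟨b 0, b 1, ?_, ?_⟩
  · have h2 := b.linearIndependent.map' S.subtype S.ker_subtype
    rwa [h3] at h2
  · calc S = Submodule.map S.subtype ⊤ := (Submodule.map_subtype_top S).symm
      _ = Submodule.map S.subtype (span F (Set.range ⇑b)) := by rw [b.span_eq]
      _ = span F (⇑S.subtype '' Set.range ⇑b) := Submodule.map_span _ _
      _ = span F {(b 0 : Fin 8 → F), (b 1 : Fin 8 → F)} := by
          rw [← Set.range_comp, h3, range_pair]

lemma classify (h2 : (2:F) ≠ 0) (S : Submodule F (Fin 8 → F))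
    (hiso : TotallyIsotropic F S) (hrk : Module.finrank F ↥S = 2) :
    ∃ k : Fin 7, SameOrbit F (TR k) S := by
  obtain ⟨v1, v2, hind, hspan⟩ := exists_basis_pair S hrk
  have hv1S : v1 ∈ S := by rw [hspan]; exact mem_pair_left _ _
  have hv2S : v2 ∈ S := by rw [hspan]; exact mem_pair_right _ _
  have d11 : xp v1 ⬝ᵥ yp v1 = 0 := iso_self h2 hiso hv1S
  have d22 : xp v2 ⬝ᵥ yp v2 = 0 := iso_self h2 hiso hv2S
  have c12 : xp v1 ⬝ᵥ yp v2 + xp v2 ⬝ᵥ yp v1 = 0 := iso_dots hiso hv1S hv2S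
  by_cases hYli : LinearIndependent F ![yp v1, yp v2]
  · by_cases hXli : LinearIndependent F ![xp v1, xp v2]
    · by_cases hc : xp v1 ⬝ᵥ yp v2 = 0
      · refine ⟨6, ?_⟩
        rw [hspan]
        exact case6 hXli hYli d11 d22 hc (by linear_combination c12 - hc)
      · refine ⟨5, ?_⟩
        rw [hspan]
        exact case5 hXli hYli hc d11 d22 rfl (by linear_combination c12)
    · by_cases hx0 : xp v1 = 0 ∧ xp v2 = 0
      · refine ⟨1, ?_⟩
        rw [hspan]
        exact case1 hYli hx0.1 hx0.2
      · obtain ⟨p, q, r, s, hdpq, hzero, hnz⟩ := reduce_pair hXli hx0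
        set w1 : Fin 8 → F := p•v1 + q•v2 with hw1
        set w2 : Fin 8 → F := r•v1 + s•v2 with hw2
        have hw1S : w1 ∈ S := add_mem (Submodule.smul_mem _ _ hv1S) (Submodule.smul_mem _ _ hv2S)
        have hw2S : w2 ∈ S := add_mem (Submodule.smul_mem _ _ hv1S) (Submodule.smul_mem _ _ hv2S)
        have hxw1 : xp w1 = p • xp v1 + q • xp v2 := by simp [hw1]
        have hxw2 : xp w2 = r • xp v1 + s • xp v2 := by simp [hw2]
        have hyw1 : yp w1 = p • yp v1 + q • yp v2 := by simp [hw1]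
        have hyw2 : yp w2 = r • yp v1 + s • yp v2 := by simp [hw2]
        have hx2zero : xp w2 = 0 := by rw [hxw2]; exact hzero
        have hx1ne : xp w1 ≠ 0 := by rw [hxw1]; exact hnz
        have hyli' : LinearIndependent F ![yp w2, yp w1] := by
          have := indep_combo hYli r s p q (by
            intro h
            exact hdpq (by linear_combination -h))
          rwa [← hyw1, ← hyw2] at this
        have h21' : xp w1 ⬝ᵥ yp w2 = 0 := by
          have := iso_dots hiso hw1S hw2S
          rwa [hx2zero, zero_dotProduct, add_zero] at this
        have h22' : xp w1 ⬝ᵥ yp w1 = 0 := iso_self h2 hiso hw1S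
        refine ⟨4, ?_⟩
        have hS : S = span F {w2, w1} := by
          rw [hspan, ← span_combo p q r s hdpq, Set.pair_comm]
        rw [hS]
        exact case4 hyli' hx2zero hx1ne h21' h22'
  · by_cases hy0 : yp v1 = 0 ∧ yp v2 = 0
    · have hXli : LinearIndependent F ![xp v1, xp v2] := by
        rw [LinearIndependent.pair_iff]
        intro a b hab
        have hz : a • v1 + b • v2 = 0 := by
          apply eq_zero_xy
          · simpa using hab
          · simp [hy0.1, hy0.2]
        exact (LinearIndependent.pair_iff.1 hind) a b hz
      refine ⟨0, ?_⟩
      rw [hspan]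
      exact case0 hXli hy0.1 hy0.2
    · obtain ⟨p, q, r, s, hdpq, hzero, hnz⟩ := reduce_pair hYli hy0
      set w1 : Fin 8 → F := p•v1 + q•v2 with hw1
      set w2 : Fin 8 → F := r•v1 + s•v2 with hw2
      have hw1S : w1 ∈ S := add_mem (Submodule.smul_mem _ _ hv1S) (Submodule.smul_mem _ _ hv2S)
      have hw2S : w2 ∈ S := add_mem (Submodule.smul_mem _ _ hv1S) (Submodule.smul_mem _ _ hv2S)
      have hxw1 : xp w1 = p • xp v1 + q • xp v2 := by simp [hw1]
      have hxw2 : xp w2 = r • xp v1 + s • xp v2 := by simp [hw2]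
      have hyw1 : yp w1 = p • yp v1 + q • yp v2 := by simp [hw1]
      have hyw2 : yp w2 = r • yp v1 + s • yp v2 := by simp [hw2]
      have hy2zero : yp w2 = 0 := by rw [hyw2]; exact hzero
      have hy1ne : yp w1 ≠ 0 := by rw [hyw1]; exact hnz
      have hwind : LinearIndependent F ![w1, w2] := indep_combo hind p q r s hdpq
      have hw2ne : w2 ≠ 0 := pair_snd_ne_zero hwind
      have hx2ne : xp w2 ≠ 0 := fun h => hw2ne (eq_zero_xy h hy2zero)
      have hSw : S = span F {w2, w1} := by
        rw [hspan, ← span_combo p q r s hdpq, Set.pair_comm]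
      by_cases hxc : ∃ d : F, xp w1 = d • xp w2
      · obtain ⟨d, hd⟩ := hxc
        set u : Fin 8 → F := (1:F)•w1 + (-d)•w2 with hu
        have huS : u ∈ S := add_mem (Submodule.smul_mem _ _ hw1S) (Submodule.smul_mem _ _ hw2S)
        have hxu : xp u = 0 := by
          simp only [hu, xp_add, xp_smul, hd]
          module
        have hyu : yp u = yp w1 := by
          simp only [hu, yp_add, yp_smul, hy2zero]
          module
        have hyune : yp u ≠ 0 := by rw [hyu]; exact hy1ne
        have hisoc : xp w2 ⬝ᵥ yp u = 0 := by
          have := iso_dots hiso hw2S huS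
          rwa [hxu, zero_dotProduct, add_zero] at this
        refine ⟨2, ?_⟩
        have hsc := span_combo (F := F) (v1 := w2) (v2 := w1) 1 0 (-d) 1 (by norm_num)
        have e1 : (1:F)•w2 + (0:F)•w1 = w2 := by module
        have e2 : (-d)•w2 + (1:F)•w1 = u := by rw [hu]; module
        rw [e1, e2] at hsc
        have hSu : S = span F {w2, u} := by rw [hSw, ← hsc]
        rw [hSu]
        exact case2 hx2ne hy2zero hxu hyune hisoc
      · have hXli' : LinearIndependent F ![xp w2, xp w1] := by
          rw [LinearIndependent.pair_iff]
          intro a b hab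
          by_cases hb : b = 0
          · subst hb
            simp only [zero_smul, add_zero] at hab
            rcases smul_eq_zero.1 hab with ha | ha
            · exact ⟨ha, rfl⟩
            · exact absurd ha hx2ne
          · exfalso
            apply hxc
            refine ⟨-a/b, funext fun j => ?_⟩
            have hj : a * xp w2 j + b * xp w1 j = 0 := by simpa using congrFun hab j
            show xp w1 j = (-a/b) * xp w2 j
            field_simp
            first
            | linear_combination hj
            | linear_combination -hj
        have h12' : xp w2 ⬝ᵥ yp w1 = 0 := by
          have := iso_dots hiso hw2S hw1S
          rwa [hy2zero, dotProduct_zero, add_zero] at this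
        have h22' : xp w1 ⬝ᵥ yp w1 = 0 := iso_self h2 hiso hw1S
        refine ⟨3, ?_⟩
        rw [hSw]
        exact case3 hXli' hy2zero hy1ne h12' h22'

end

end S6

theorem statement6 (h2 : (2 : F) ≠ 0) :
    ∃ T : Fin 7 → Submodule F (Fin 8 → F),
      (∀ k, TotallyIsotropic F (T k) ∧ Module.finrank F ↥(T k) = 2) ∧
      (∀ k l, k ≠ l → ¬ SameOrbit F (T k) (T l)) ∧
      (∀ S : Submodule F (Fin 8 → F),
        TotallyIsotropic F S → Module.finrank F ↥S = 2 → ∃ k, SameOrbit F (T k) S) := by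
  refine ⟨S6.TR (F := F), fun k => ⟨S6.iso_TR k, S6.finrank_TR k⟩, S6.sep_TR, ?_⟩
  intro S hS hrk
  exact S6.classify h2 S hS hrk
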